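/- Let X be a set, f, g : X → X bijections, p, q ∈ X, and n, m nonzero integers. If the set O_f(p) ∩ O_g(q) of common orbit points is infinite, then there exist points p', q' ∈ X such that O_{f^n}(p') ∩ O_{g^m}(q') is infinite. -/

import Mathlib

private lemma orbit_decomp {X : Type*} (f : Equiv.Perm X) (p : X) (n : ℤ) (hn : n ≠ 0)
    (k : ℤ) : ∃ l ∈ Finset.range n.natAbs, ∃ a : ℤ, ((f ^ n) ^ a) ((f ^ (l : ℤ)) p) = (f ^ k) p := by
  have hb : (0 : ℤ) < (n.natAbs : ℤ) := by
    exact_mod_cast Int.natAbs_pos.mpr hn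
  set b : ℤ := (n.natAbs : ℤ) with hbdef
  refine ⟨(k % b).toNat, ?_, n.sign * (k / b), ?_⟩
  · have h1 : 0 ≤ k % b := Int.emod_nonneg k (ne_of_gt hb)
    have h2 : k % b < b := Int.emod_lt_of_pos k hb
    simp only [Finset.mem_range]
    omega
  · have hl : ((k % b).toNat : ℤ) = k % b :=
      Int.toNat_of_nonneg (Int.emod_nonneg k (ne_of_gt hb))
    have hsign : n * n.sign = b := Int.mul_sign_self n
    have key : n * (n.sign * (k / b)) + ((k % b).toNat : ℤ) = k := by
      rw [hl, ← mul_assoc, hsign]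
      exact Int.mul_ediv_add_emod k b
    calc ((f ^ n) ^ (n.sign * (k / b))) ((f ^ ((((k % b).toNat) : ℕ) : ℤ)) p)
        = (f ^ (n * (n.sign * (k / b))) * f ^ (((k % b).toNat : ℕ) : ℤ)) p := by
          rw [← zpow_mul]; rfl
      _ = (f ^ (n * (n.sign * (k / b)) + (((k % b).toNat : ℕ) : ℤ))) p := by rw [zpow_add]
      _ = (f ^ k) p := by rw [key]

theorem infinite_orbit_inter_of_iterates {X : Type*} (f g : Equiv.Perm X) (p q : X)
    (n m : ℤ) (hn : n ≠ 0) (hm : m ≠ 0)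
    (h : ({x | ∃ k : ℤ, (f ^ k) p = x} ∩ {x | ∃ k : ℤ, (g ^ k) q = x}).Infinite) :
    ∃ p' q' : X,
      ({x | ∃ k : ℤ, ((f ^ n) ^ k) p' = x} ∩ {x | ∃ k : ℤ, ((g ^ m) ^ k) q' = x}).Infinite := by
  by_contra hcon
  push_neg at hcon
  apply h
  have cover : ({x | ∃ k : ℤ, (f ^ k) p = x} ∩ {x | ∃ k : ℤ, (g ^ k) q = x}) ⊆
      ⋃ l ∈ Finset.range n.natAbs, ⋃ l' ∈ Finset.range m.natAbs,
        ({x | ∃ k : ℤ, ((f ^ n) ^ k) ((f ^ (l : ℤ)) p) = x} ∩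
          {x | ∃ k : ℤ, ((g ^ m) ^ k) ((g ^ (l' : ℤ)) q) = x}) := by
    rintro x ⟨⟨k, hk⟩, ⟨j, hj⟩⟩
    obtain ⟨l, hl, a, ha⟩ := orbit_decomp f p n hn k
    obtain ⟨l', hl', a', ha'⟩ := orbit_decomp g q m hm j
    simp only [Set.mem_iUnion]
    exact ⟨l, hl, l', hl', ⟨a, ha.trans hk⟩, ⟨a', ha'.trans hj⟩⟩
  refine Set.Finite.subset ?_ cover
  refine Set.Finite.biUnion (Finset.finite_toSet _) fun l _ =>
    Set.Finite.biUnion (Finset.finite_toSet _) fun l' _ => ?_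
  exact hcon _ _
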